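/- Comparison of majorized loss functions for α ∈ [1/2, 1): with J_α(u) = (1/(α(α−1)))((1 − ((1−α)/2)u)_+^α − 1) and J_α^♭(u) = (1/(α(α−1)))((1 − (1−α)^2 u)_+^{α/(2(1−α))} − 1), one has J_α^♭(u) ≤ J_α(u) for every u ≥ 0. -/

import Mathlib

/-- For `α ∈ [1/2, 1)`, the improved majorized loss `J_α^♭` is dominated by the
majorized loss `J_α`. -/
theorem improved_loss_le_loss (α : ℝ) (hα : α ∈ Set.Ico (1/2 : ℝ) 1)
    (u : ℝ) (hu : 0 ≤ u) :
    (1 / (α * (α - 1))) * ((max (1 - (1 - α) ^ 2 * u) 0) ^ (α / (2 * (1 - α))) - 1)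
      ≤ (1 / (α * (α - 1))) * ((max (1 - (1 - α) / 2 * u) 0) ^ α - 1) := by
  obtain ⟨hα1, hα2⟩ := hα
  have hαpos : 0 < α := by linarith
  have hβ : 0 < 1 - α := by linarith
  have hc : 1 / (α * (α - 1)) < 0 := by
    apply div_neg_of_pos_of_neg one_pos
    exact mul_neg_of_pos_of_neg hαpos (by linarith)
  -- reduce to inner inequality
  have key : (max (1 - (1 - α) / 2 * u) 0) ^ α
      ≤ (max (1 - (1 - α) ^ 2 * u) 0) ^ (α / (2 * (1 - α))) := by
    rcases le_or_gt (1 - (1 - α) ^ 2 * u) 0 with h | h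
    · -- both bases are 0
      have h2 : 1 - (1 - α) / 2 * u ≤ 0 := by nlinarith
      rw [max_eq_right h, max_eq_right h2, Real.zero_rpow hαpos.ne',
        Real.zero_rpow]
      positivity
    · rw [max_eq_left h.le]
      have hp : (1:ℝ) ≤ 1 / (2 * (1 - α)) := by
        rw [le_div_iff₀ (by linarith)]; linarith
      have hbern : 1 - (1 - α) / 2 * u ≤ (1 - (1 - α) ^ 2 * u) ^ (1 / (2 * (1 - α))) := by
        have := one_add_mul_self_le_rpow_one_add (s := -((1 - α) ^ 2 * u))
          (by linarith) hp
        have heq : 1 / (2 * (1 - α)) * -((1 - α) ^ 2 * u) = -((1 - α) / 2 * u) := by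
          field_simp
        rw [heq] at this
        calc 1 - (1 - α) / 2 * u = 1 + -((1 - α) / 2 * u) := by ring
          _ ≤ (1 + -((1 - α) ^ 2 * u)) ^ (1 / (2 * (1 - α))) := this
          _ = (1 - (1 - α) ^ 2 * u) ^ (1 / (2 * (1 - α))) := by ring_nf
      have hLnn : 0 ≤ (1 - (1 - α) ^ 2 * u) ^ (1 / (2 * (1 - α))) :=
        Real.rpow_nonneg h.le _
      have hmax : max (1 - (1 - α) / 2 * u) 0
          ≤ (1 - (1 - α) ^ 2 * u) ^ (1 / (2 * (1 - α))) :=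
        max_le hbern hLnn
      calc (max (1 - (1 - α) / 2 * u) 0) ^ α
          ≤ ((1 - (1 - α) ^ 2 * u) ^ (1 / (2 * (1 - α)))) ^ α :=
            Real.rpow_le_rpow (le_max_right _ _) hmax hαpos.le
        _ = (1 - (1 - α) ^ 2 * u) ^ (α / (2 * (1 - α))) := by
            rw [← Real.rpow_mul h.le]
            congr 1
            ring
  have := sub_le_sub_right key 1
  exact mul_le_mul_of_nonpos_left this hc.le
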